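/- Let A : X → Y be a bounded linear operator from a Banach space X to a Hilbert space Y, y ∈ Y, y^δ ∈ Y with ‖y^δ - y‖ ≤ δ, and x̂ ∈ X with A x̂ = y. Let x ∈ X, set r := A x - y^δ, and suppose 0 ≤ t ≤ μ₀‖r‖²/‖A* r‖² (when A* r ≠ 0) and the constant c₀ := 1 - μ₀/(4σ) > 0. Then (t²/(4σ))·‖A* r‖² - t·⟨r, A x - y⟩ ≤ -c₀·t·‖r‖² + t·δ·‖r‖ ≤ t·δ²/(4c₀). -/

import Mathlib

theorem stmt_7 {X Y : Type*} [NormedAddCommGroup X] [NormedSpace ℝ X] [CompleteSpace X]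
    [NormedAddCommGroup Y] [InnerProductSpace ℝ Y] [CompleteSpace Y]
    (A : X →L[ℝ] Y) (y ydelta : Y) (δ : ℝ) (hnoise : ‖ydelta - y‖ ≤ δ)
    (xhat : X) (hxhat : A xhat = y)
    (σ μ₀ : ℝ) (hσ : 0 < σ) (hμ : 0 < μ₀) (hc : 0 < 1 - μ₀ / (4 * σ))
    (x : X) (r : Y) (hr : r = A x - ydelta)
    -- `A* r` is the functional `z ↦ ⟪r, A z⟫`
    (t : ℝ) (ht0 : 0 ≤ t)
    (ht : (innerSL ℝ r).comp A ≠ 0 →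
      t ≤ μ₀ * ‖r‖ ^ 2 / ‖(innerSL ℝ r).comp A‖ ^ 2) :
    t ^ 2 / (4 * σ) * ‖(innerSL ℝ r).comp A‖ ^ 2 - t * (inner ℝ r (A x - y) : ℝ)
        ≤ -(1 - μ₀ / (4 * σ)) * t * ‖r‖ ^ 2 + t * δ * ‖r‖ ∧
      -(1 - μ₀ / (4 * σ)) * t * ‖r‖ ^ 2 + t * δ * ‖r‖
        ≤ t * δ ^ 2 / (4 * (1 - μ₀ / (4 * σ))) := by
  set B := (innerSL ℝ r).comp A with hB
  have h1 : t * ‖B‖ ^ 2 ≤ μ₀ * ‖r‖ ^ 2 := by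
    by_cases hz : B = 0
    · rw [hz]
      simp only [norm_zero, ne_eq, OfNat.ofNat_ne_zero, not_false_eq_true, zero_pow, mul_zero]
      positivity
    · have hpos : 0 < ‖B‖ ^ 2 := pow_pos (norm_pos_iff.mpr hz) 2
      have := ht hz
      rw [le_div_iff₀ hpos] at this
      linarith
  have h2 : (inner ℝ r (A x - y) : ℝ) = ‖r‖ ^ 2 + (inner ℝ r (ydelta - y) : ℝ) := by
    have : A x - y = r + (ydelta - y) := by rw [hr]; abel
    rw [this, inner_add_right, real_inner_self_eq_norm_sq]
  have h3 : -(‖r‖ * δ) ≤ (inner ℝ r (ydelta - y) : ℝ) := by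
    have h := abs_real_inner_le_norm r (ydelta - y)
    have h' : ‖r‖ * ‖ydelta - y‖ ≤ ‖r‖ * δ :=
      mul_le_mul_of_nonneg_left hnoise (norm_nonneg r)
    have := neg_abs_le (inner ℝ r (ydelta - y) : ℝ)
    linarith
  constructor
  · have h4 : t / (4 * σ) * (t * ‖B‖ ^ 2) ≤ t / (4 * σ) * (μ₀ * ‖r‖ ^ 2) :=
      mul_le_mul_of_nonneg_left h1 (by positivity)
    have h5 : t * -(‖r‖ * δ) ≤ t * (inner ℝ r (ydelta - y) : ℝ) :=
      mul_le_mul_of_nonneg_left h3 ht0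
    rw [h2]
    have hσ' : (4 * σ) ≠ 0 := by positivity
    have e1 : t ^ 2 / (4 * σ) * ‖B‖ ^ 2 = t / (4 * σ) * (t * ‖B‖ ^ 2) := by ring
    have e2 : t / (4 * σ) * (μ₀ * ‖r‖ ^ 2) = μ₀ / (4 * σ) * t * ‖r‖ ^ 2 := by
      field_simp
    nlinarith [h4, h5]
  · have hc4 : 0 < 4 * (1 - μ₀ / (4 * σ)) := by linarith
    rw [le_div_iff₀ hc4]
    nlinarith [mul_nonneg ht0 (mul_nonneg hc.le (sq_nonneg (2 * (1 - μ₀ / (4 * σ)) * ‖r‖ - δ)))]
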